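/- If f ∈ C⁴[−1,1] then there exists ξ ∈ [−1,1] such that ∫₋₁¹ f(t) dt = (1/2)[f(−√3/3) + f(√3/3)] + (1/2)[(1/3)f(−1) + (4/3)f(0) + (1/3)f(1)] − f⁽⁴⁾(ξ)/540. -/

import Mathlib

open Set intervalIntegral

namespace EGL

noncomputable def A (G : ℝ → ℝ) (j : ℕ) (x : ℝ) : ℝ := ∫ t in (-1:ℝ)..x, t ^ j * G t

variable {G : ℝ → ℝ}

lemma contj (hG : Continuous G) (j : ℕ) : Continuous fun t : ℝ => t ^ j * G t :=
  (continuous_pow j).mul hG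

lemma hasDerivAt_A (hG : Continuous G) (j : ℕ) (x : ℝ) : HasDerivAt (A G j) (x ^ j * G x) x :=
  integral_hasDerivAt_right ((contj hG j).intervalIntegrable _ _)
    ((contj hG j).stronglyMeasurable.stronglyMeasurableAtFilter)
    (contj hG j).continuousAt

@[fun_prop]
lemma cont_A (hG : Continuous G) (j : ℕ) : Continuous (A G j) := by
  rw [continuous_iff_continuousAt]; exact fun x => (hasDerivAt_A hG j x).continuousAt

lemma A_neg_one (G : ℝ → ℝ) (j : ℕ) : A G j (-1) = 0 := integral_same

lemma ftc_step {u v : ℝ → ℝ} (hu : ContinuousOn u (Icc (-1:ℝ) 1))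
    (hv : ContinuousOn v (Icc (-1:ℝ) 1))
    (hd : ∀ x ∈ Icc (-1:ℝ) 1, HasDerivWithinAt u (v x) (Icc (-1:ℝ) 1) x)
    {x : ℝ} (hx : x ∈ Icc (-1:ℝ) 1) :
    u x = u (-1) + ∫ t in (-1:ℝ)..x, v t := by
  have h1 : (-1:ℝ) ≤ x := hx.1
  have hIcc : Icc (-1:ℝ) x ⊆ Icc (-1:ℝ) 1 := Icc_subset_Icc le_rfl hx.2
  have key := integral_eq_sub_of_hasDeriv_right_of_le h1 (hu.mono hIcc)
    (fun t ht => ((hd t ⟨ht.1.le, ht.2.le.trans hx.2⟩).hasDerivAt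
      (Icc_mem_nhds ht.1 (lt_of_lt_of_le ht.2 hx.2))).hasDerivWithinAt)
    ((hv.mono hIcc).intervalIntegrable_of_Icc h1)
  linarith [key]


lemma I2 (hG : Continuous G) (c : ℝ) (x : ℝ) :
    ∫ t in (-1:ℝ)..x, (c + A G 0 t) =
      c * (x + 1) + (x * A G 0 x - A G 1 x) := by
  have hF : ∀ t : ℝ, HasDerivAt (fun t => c * t + (t * A G 0 t - A G 1 t)) (c + A G 0 t) t := by
    intro t
    have h := ((hasDerivAt_id t).const_mul c).add
      (((hasDerivAt_id t).mul (hasDerivAt_A hG 0 t)).sub (hasDerivAt_A hG 1 t))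
    refine h.congr_deriv ?_
    simp only [id_eq, pow_zero, pow_one, one_mul]
    ring
  rw [integral_eq_sub_of_hasDerivAt (fun t _ => hF t)
    ((continuous_const.add (cont_A hG 0)).intervalIntegrable _ _)]
  rw [A_neg_one G 0, A_neg_one G 1]
  ring

lemma I3 (hG : Continuous G) (c2 c3 : ℝ) (x : ℝ) :
    ∫ t in (-1:ℝ)..x, (c2 + c3 * (t + 1) + (t * A G 0 t - A G 1 t)) =
      c2 * (x + 1) + c3 * (x + 1) ^ 2 / 2 +
        (x ^ 2 * A G 0 x - 2 * x * A G 1 x + A G 2 x) / 2 := by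
  have hF : ∀ t : ℝ, HasDerivAt
      (fun t => c2 * t + c3 * (t + 1) ^ 2 / 2 +
        (t ^ 2 * A G 0 t - 2 * t * A G 1 t + A G 2 t) / 2)
      (c2 + c3 * (t + 1) + (t * A G 0 t - A G 1 t)) t := by
    intro t
    have hq : HasDerivAt (fun t : ℝ => (t + 1) ^ 2) (2 * (t + 1)) t := by
      simpa using (((hasDerivAt_id t).add_const 1).fun_pow 2)
    have h := (((hasDerivAt_id t).const_mul c2).add ((hq.const_mul c3).div_const 2)).add
      (((((hasDerivAt_pow 2 t).mul (hasDerivAt_A hG 0 t)).sub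
         (((hasDerivAt_id t).const_mul 2).mul (hasDerivAt_A hG 1 t))).add
         (hasDerivAt_A hG 2 t)).div_const 2)
    refine h.congr_deriv ?_
    simp only [id_eq, pow_zero, pow_one, one_mul]
    push_cast
    ring
  rw [integral_eq_sub_of_hasDerivAt (fun t _ => hF t)
    ((by fun_prop : Continuous _).intervalIntegrable _ _)]
  rw [A_neg_one G 0, A_neg_one G 1, A_neg_one G 2]
  ring

lemma I4 (hG : Continuous G) (c1 c2 c3 : ℝ) (x : ℝ) :
    ∫ t in (-1:ℝ)..x, (c1 + c2 * (t + 1) + c3 * (t + 1) ^ 2 / 2 +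
        (t ^ 2 * A G 0 t - 2 * t * A G 1 t + A G 2 t) / 2) =
      c1 * (x + 1) + c2 * (x + 1) ^ 2 / 2 + c3 * (x + 1) ^ 3 / 6 +
        (x ^ 3 * A G 0 x - 3 * x ^ 2 * A G 1 x + 3 * x * A G 2 x - A G 3 x) / 6 := by
  have hF : ∀ t : ℝ, HasDerivAt
      (fun t => c1 * t + c2 * (t + 1) ^ 2 / 2 + c3 * (t + 1) ^ 3 / 6 +
        (t ^ 3 * A G 0 t - 3 * t ^ 2 * A G 1 t + 3 * t * A G 2 t - A G 3 t) / 6)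
      (c1 + c2 * (t + 1) + c3 * (t + 1) ^ 2 / 2 +
        (t ^ 2 * A G 0 t - 2 * t * A G 1 t + A G 2 t) / 2) t := by
    intro t
    have hq : HasDerivAt (fun t : ℝ => (t + 1) ^ 2) (2 * (t + 1)) t := by
      simpa using (((hasDerivAt_id t).add_const 1).fun_pow 2)
    have hq3 : HasDerivAt (fun t : ℝ => (t + 1) ^ 3) (3 * (t + 1) ^ 2) t := by
      simpa using (((hasDerivAt_id t).add_const 1).fun_pow 3)
    have h := ((((hasDerivAt_id t).const_mul c1).add ((hq.const_mul c2).div_const 2)).add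
        ((hq3.const_mul c3).div_const 6)).add
      ((((((hasDerivAt_pow 3 t).mul (hasDerivAt_A hG 0 t)).sub
         (((hasDerivAt_pow 2 t).const_mul 3).mul (hasDerivAt_A hG 1 t))).add
         ((((hasDerivAt_id t).const_mul 3)).mul (hasDerivAt_A hG 2 t))).sub
         (hasDerivAt_A hG 3 t)).div_const 6)
    refine h.congr_deriv ?_
    simp only [id_eq, pow_zero, pow_one, one_mul]
    push_cast
    ring
  rw [integral_eq_sub_of_hasDerivAt (fun t _ => hF t)
    ((by fun_prop : Continuous _).intervalIntegrable _ _)]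
  rw [A_neg_one G 0, A_neg_one G 1, A_neg_one G 2, A_neg_one G 3]
  ring

lemma I5 (hG : Continuous G) (c0 c1 c2 c3 : ℝ) :
    ∫ x in (-1:ℝ)..1, (c0 + c1 * (x + 1) + c2 * (x + 1) ^ 2 / 2 + c3 * (x + 1) ^ 3 / 6 +
        (x ^ 3 * A G 0 x - 3 * x ^ 2 * A G 1 x + 3 * x * A G 2 x - A G 3 x) / 6) =
      2 * c0 + 2 * c1 + (4 / 3) * c2 + (2 / 3) * c3 +
        (A G 0 1 - 4 * A G 1 1 + 6 * A G 2 1 - 4 * A G 3 1 + A G 4 1) / 24 := by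
  have hF : ∀ t : ℝ, HasDerivAt
      (fun t => c0 * t + c1 * (t + 1) ^ 2 / 2 + c2 * (t + 1) ^ 3 / 6 + c3 * (t + 1) ^ 4 / 24 +
        (t ^ 4 * A G 0 t - 4 * t ^ 3 * A G 1 t + 6 * t ^ 2 * A G 2 t - 4 * t * A G 3 t + A G 4 t) / 24)
      (c0 + c1 * (t + 1) + c2 * (t + 1) ^ 2 / 2 + c3 * (t + 1) ^ 3 / 6 +
        (t ^ 3 * A G 0 t - 3 * t ^ 2 * A G 1 t + 3 * t * A G 2 t - A G 3 t) / 6) t := by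
    intro t
    have hq : HasDerivAt (fun t : ℝ => (t + 1) ^ 2) (2 * (t + 1)) t := by
      simpa using (((hasDerivAt_id t).add_const 1).fun_pow 2)
    have hq3 : HasDerivAt (fun t : ℝ => (t + 1) ^ 3) (3 * (t + 1) ^ 2) t := by
      simpa using (((hasDerivAt_id t).add_const 1).fun_pow 3)
    have hq4 : HasDerivAt (fun t : ℝ => (t + 1) ^ 4) (4 * (t + 1) ^ 3) t := by
      simpa using (((hasDerivAt_id t).add_const 1).fun_pow 4)
    have h := (((((hasDerivAt_id t).const_mul c0).add ((hq.const_mul c1).div_const 2)).add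
        ((hq3.const_mul c2).div_const 6)).add ((hq4.const_mul c3).div_const 24)).add
      (((((((hasDerivAt_pow 4 t).mul (hasDerivAt_A hG 0 t)).sub
         (((hasDerivAt_pow 3 t).const_mul 4).mul (hasDerivAt_A hG 1 t))).add
         (((hasDerivAt_pow 2 t).const_mul 6).mul (hasDerivAt_A hG 2 t))).sub
         ((((hasDerivAt_id t).const_mul 4)).mul (hasDerivAt_A hG 3 t))).add
         (hasDerivAt_A hG 4 t)).div_const 24)
    refine h.congr_deriv ?_
    simp only [id_eq, pow_zero, pow_one, one_mul]
    push_cast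
    ring
  rw [integral_eq_sub_of_hasDerivAt (fun t _ => hF t)
    ((by fun_prop : Continuous _).intervalIntegrable _ _)]
  rw [A_neg_one G 0, A_neg_one G 1, A_neg_one G 2, A_neg_one G 3, A_neg_one G 4]
  ring

lemma lincomb (hG : Continuous G) (a b e0 e1 e2 e3 e4 : ℝ) :
    ∫ t in a..b, (e0 + e1 * t + e2 * t ^ 2 + e3 * t ^ 3 + e4 * t ^ 4) * G t =
      e0 * (∫ t in a..b, t ^ 0 * G t) + e1 * (∫ t in a..b, t ^ 1 * G t) +
      e2 * (∫ t in a..b, t ^ 2 * G t) + e3 * (∫ t in a..b, t ^ 3 * G t) +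
      e4 * (∫ t in a..b, t ^ 4 * G t) := by
  have hrw : (fun t => (e0 + e1 * t + e2 * t ^ 2 + e3 * t ^ 3 + e4 * t ^ 4) * G t) =
      fun t => e0 * (t ^ 0 * G t) + (e1 * (t ^ 1 * G t) + (e2 * (t ^ 2 * G t) +
        (e3 * (t ^ 3 * G t) + e4 * (t ^ 4 * G t)))) := by
    funext t; ring
  have hi : ∀ (c : ℝ) (j : ℕ), IntervalIntegrable (fun t => c * (t ^ j * G t)) MeasureTheory.volume a b :=
    fun c j => ((continuous_const.mul ((continuous_pow j).mul hG)).intervalIntegrable _ _)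
  rw [hrw, integral_add (hi e0 0) (((hi e1 1).add ((hi e2 2).add ((hi e3 3).add (hi e4 4)))))]
  rw [integral_add (hi e1 1) ((hi e2 2).add ((hi e3 3).add (hi e4 4)))]
  rw [integral_add (hi e2 2) ((hi e3 3).add (hi e4 4)), integral_add (hi e3 3) (hi e4 4)]
  simp only [integral_const_mul]
  ring

lemma int_quartic (a b e0 e1 e2 e3 e4 : ℝ) :
    ∫ t in a..b, (e0 + e1 * t + e2 * t ^ 2 + e3 * t ^ 3 + e4 * t ^ 4) =
      e0 * (b - a) + e1 * (b ^ 2 - a ^ 2) / 2 + e2 * (b ^ 3 - a ^ 3) / 3 +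
      e3 * (b ^ 4 - a ^ 4) / 4 + e4 * (b ^ 5 - a ^ 5) / 5 := by
  have hF : ∀ t : ℝ, HasDerivAt
      (fun t : ℝ => e0 * t + e1 * t ^ 2 / 2 + e2 * t ^ 3 / 3 + e3 * t ^ 4 / 4 + e4 * t ^ 5 / 5)
      (e0 + e1 * t + e2 * t ^ 2 + e3 * t ^ 3 + e4 * t ^ 4) t := by
    intro t
    have h := (((((hasDerivAt_id t).const_mul e0).add
      (((hasDerivAt_pow 2 t).const_mul e1).div_const 2)).add
      (((hasDerivAt_pow 3 t).const_mul e2).div_const 3)).add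
      (((hasDerivAt_pow 4 t).const_mul e3).div_const 4)).add
      (((hasDerivAt_pow 5 t).const_mul e4).div_const 5)
    refine h.congr_deriv ?_
    push_cast
    ring
  rw [integral_eq_sub_of_hasDerivAt (fun t _ => hF t)
    ((by fun_prop : Continuous fun t : ℝ => e0 + e1 * t + e2 * t ^ 2 + e3 * t ^ 3 + e4 * t ^ 4).intervalIntegrable _ _)]
  ring

variable {s t : ℝ}

lemma sbounds (hs2 : s ^ 2 = 1/3) (hsp : 0 < s) : 1/3 < s ∧ s < 3/5 := by
  constructor <;> nlinarith

lemma P4nn (hs2 : s ^ 2 = 1/3) (hsp : 0 < s) (ht1 : s ≤ t) (ht2 : t ≤ 1) :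
    0 ≤ -1/72 + (1/12) * t + (-1/6) * t ^ 2 + (5/36) * t ^ 3 + (-1/24) * t ^ 4 := by
  have h13 : 1/3 < s := (sbounds hs2 hsp).1
  nlinarith [mul_nonneg (pow_nonneg (by linarith : (0:ℝ) ≤ 1 - t) 3) (by linarith : (0:ℝ) ≤ 3*t - 1)]

lemma P1nn (hs2 : s ^ 2 = 1/3) (hsp : 0 < s) (ht1 : -1 ≤ t) (ht2 : t ≤ -s) :
    0 ≤ -1/72 + (1/12 - s^2/2) * t + (-1/6) * t ^ 2 + (-5/36) * t ^ 3 + (-1/24) * t ^ 4 := by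
  have h13 : 1/3 < s := (sbounds hs2 hsp).1
  nlinarith [mul_nonneg (pow_nonneg (by linarith : (0:ℝ) ≤ 1 + t) 3) (by linarith : (0:ℝ) ≤ -3*t - 1)]

lemma P3nn (hs2 : s ^ 2 = 1/3) (hsp : 0 < s) (ht1 : 0 ≤ t) (ht2 : t ≤ s) :
    0 ≤ (-1/72 + s^3/12) + (1/12 - s^2/4) * t + (-1/6 + s/4) * t ^ 2 + (1/18) * t ^ 3 + (-1/24) * t ^ 4 := by
  have h13 : 1/3 < s := (sbounds hs2 hsp).1
  have h35 : s < 3/5 := (sbounds hs2 hsp).2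
  nlinarith [mul_nonneg ht1 (sub_nonneg.2 ht2), sq_nonneg t, sq_nonneg (t-s), sq_nonneg (t*(t-s)), pow_nonneg ht1 3, pow_nonneg ht1 4]

lemma P2nn (hs2 : s ^ 2 = 1/3) (hsp : 0 < s) (ht1 : -s ≤ t) (ht2 : t ≤ 0) :
    0 ≤ (-1/72 + s^3/12) + (1/12 - s^2/4) * t + (-1/6 + s/4) * t ^ 2 + (-1/18) * t ^ 3 + (-1/24) * t ^ 4 := by
  have h13 : 1/3 < s := (sbounds hs2 hsp).1
  have h35 : s < 3/5 := (sbounds hs2 hsp).2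
  nlinarith [mul_nonneg (neg_nonneg.2 ht2) (by linarith : (0:ℝ) ≤ s + t), sq_nonneg t, sq_nonneg (t+s), sq_nonneg (t*(t+s)), pow_nonneg (neg_nonneg.2 ht2) 3, pow_nonneg (neg_nonneg.2 ht2) 4]

lemma rep {f : ℝ → ℝ} (hf : ContDiffOn ℝ 4 f (Icc (-1:ℝ) 1)) (hG : Continuous G)
    (hGeq : ∀ x ∈ Icc (-1:ℝ) 1, G x = iteratedDerivWithin 4 f (Icc (-1:ℝ) 1) x) :
    ∀ x ∈ Icc (-1:ℝ) 1, f x =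
      f (-1) + iteratedDerivWithin 1 f (Icc (-1:ℝ) 1) (-1) * (x + 1)
      + iteratedDerivWithin 2 f (Icc (-1:ℝ) 1) (-1) * (x + 1) ^ 2 / 2
      + iteratedDerivWithin 3 f (Icc (-1:ℝ) 1) (-1) * (x + 1) ^ 3 / 6
      + (x ^ 3 * A G 0 x - 3 * x ^ 2 * A G 1 x + 3 * x * A G 2 x - A G 3 x) / 6 := by
  have hUD : UniqueDiffOn ℝ (Icc (-1:ℝ) 1) := uniqueDiffOn_Icc (by norm_num)
  have hcont : ∀ k : ℕ, k ≤ 4 → ContinuousOn (iteratedDerivWithin k f (Icc (-1:ℝ) 1)) (Icc (-1:ℝ) 1) :=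
    fun k hk => hf.continuousOn_iteratedDerivWithin (by exact_mod_cast hk) hUD
  have hder : ∀ k : ℕ, k < 4 → ∀ x ∈ Icc (-1:ℝ) 1,
      HasDerivWithinAt (iteratedDerivWithin k f (Icc (-1:ℝ) 1))
        (iteratedDerivWithin (k+1) f (Icc (-1:ℝ) 1) x) (Icc (-1:ℝ) 1) x := by
    intro k hk x hx
    have hdiff := (hf.differentiableOn_iteratedDerivWithin (m := k) (by exact_mod_cast hk) hUD) x hx
    have h2 := hdiff.hasDerivWithinAt
    rwa [← iteratedDerivWithin_succ] at h2
  have h3 : ∀ x ∈ Icc (-1:ℝ) 1, iteratedDerivWithin 3 f (Icc (-1:ℝ) 1) x =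
      iteratedDerivWithin 3 f (Icc (-1:ℝ) 1) (-1) + A G 0 x := by
    intro x hx
    have hstep := ftc_step (hcont 3 (by norm_num)) (hG.continuousOn)
      (fun y hy => by rw [hGeq y hy]; exact hder 3 (by norm_num) y hy) hx
    rw [hstep]
    congr 1
    rw [show A G 0 x = ∫ t in (-1:ℝ)..x, t ^ 0 * G t from rfl]
    apply integral_congr
    intro t _
    simp
  have h2 : ∀ x ∈ Icc (-1:ℝ) 1, iteratedDerivWithin 2 f (Icc (-1:ℝ) 1) x =
      iteratedDerivWithin 2 f (Icc (-1:ℝ) 1) (-1)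
      + iteratedDerivWithin 3 f (Icc (-1:ℝ) 1) (-1) * (x + 1)
      + (x * A G 0 x - A G 1 x) := by
    intro x hx
    have hstep := ftc_step (hcont 2 (by norm_num)) (hcont 3 (by norm_num))
      (hder 2 (by norm_num)) hx
    rw [hstep, integral_congr (g := fun t => iteratedDerivWithin 3 f (Icc (-1:ℝ) 1) (-1) + A G 0 t)
      (fun t ht => h3 t (by
        rw [uIcc_of_le hx.1] at ht
        exact ⟨ht.1, le_trans ht.2 hx.2⟩)), I2 hG]
    ring
  have h1 : ∀ x ∈ Icc (-1:ℝ) 1, iteratedDerivWithin 1 f (Icc (-1:ℝ) 1) x =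
      iteratedDerivWithin 1 f (Icc (-1:ℝ) 1) (-1)
      + iteratedDerivWithin 2 f (Icc (-1:ℝ) 1) (-1) * (x + 1)
      + iteratedDerivWithin 3 f (Icc (-1:ℝ) 1) (-1) * (x + 1) ^ 2 / 2
      + (x ^ 2 * A G 0 x - 2 * x * A G 1 x + A G 2 x) / 2 := by
    intro x hx
    have hstep := ftc_step (hcont 1 (by norm_num)) (hcont 2 (by norm_num))
      (hder 1 (by norm_num)) hx
    rw [hstep, integral_congr
      (g := fun t => iteratedDerivWithin 2 f (Icc (-1:ℝ) 1) (-1)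
        + iteratedDerivWithin 3 f (Icc (-1:ℝ) 1) (-1) * (t + 1) + (t * A G 0 t - A G 1 t))
      (fun t ht => h2 t (by
        rw [uIcc_of_le hx.1] at ht
        exact ⟨ht.1, le_trans ht.2 hx.2⟩)), I3 hG]
    ring
  intro x hx
  have h00 : iteratedDerivWithin 0 f (Icc (-1:ℝ) 1) = f := iteratedDerivWithin_zero
  have hstep := ftc_step (u := f) (by rw [← h00]; exact hcont 0 (by norm_num)) (hcont 1 (by norm_num))
    (fun y hy => by rw [← h00]; exact hder 0 (by norm_num) y hy) hx
  rw [hstep, integral_congr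
    (g := fun t => iteratedDerivWithin 1 f (Icc (-1:ℝ) 1) (-1)
      + iteratedDerivWithin 2 f (Icc (-1:ℝ) 1) (-1) * (t + 1)
      + iteratedDerivWithin 3 f (Icc (-1:ℝ) 1) (-1) * (t + 1) ^ 2 / 2
      + (t ^ 2 * A G 0 t - 2 * t * A G 1 t + A G 2 t) / 2)
    (fun t ht => h1 t (by
      rw [uIcc_of_le hx.1] at ht
      exact ⟨ht.1, le_trans ht.2 hx.2⟩)), I4 hG]
  ring

lemma piece_bound (hG : Continuous G) {a b m M : ℝ} (hab : a ≤ b) (hsub : Icc a b ⊆ Icc (-1:ℝ) 1)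
    (hmin : ∀ y ∈ Icc (-1:ℝ) 1, m ≤ G y) (hmax : ∀ y ∈ Icc (-1:ℝ) 1, G y ≤ M)
    (P : ℝ → ℝ) (hP : Continuous P) (hPnn : ∀ t ∈ Icc a b, 0 ≤ P t) :
    (∫ t in a..b, P t) * m ≤ (∫ t in a..b, P t * G t) ∧
      (∫ t in a..b, P t * G t) ≤ (∫ t in a..b, P t) * M := by
  constructor
  · have h := integral_mono_on (μ := MeasureTheory.volume) hab
      ((hP.mul continuous_const).intervalIntegrable _ _) ((hP.mul hG).intervalIntegrable _ _)
      (fun t ht => mul_le_mul_of_nonneg_left (hmin t (hsub ht)) (hPnn t ht))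
    simp only [Pi.mul_apply] at h
    rwa [integral_mul_const] at h
  · have h := integral_mono_on (μ := MeasureTheory.volume) hab
      ((hP.mul hG).intervalIntegrable _ _) ((hP.mul continuous_const).intervalIntegrable _ _)
      (fun t ht => mul_le_mul_of_nonneg_left (hmax t (hsub ht)) (hPnn t ht))
    simp only [Pi.mul_apply] at h
    rwa [integral_mul_const] at h

lemma hv {s : ℝ} (hs2 : s ^ 2 = 1/3) :
    ((-1/72) * (-s - -1) + (1/12 - s^2/2) * ((-s) ^ 2 - (-1) ^ 2) / 2 + (-1/6) * ((-s) ^ 3 - (-1) ^ 3) / 3 +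
      (-5/36) * ((-s) ^ 4 - (-1) ^ 4) / 4 + (-1/24) * ((-s) ^ 5 - (-1) ^ 5) / 5) +
    ((-1/72 + s^3/12) * (0 - -s) + (1/12 - s^2/4) * ((0:ℝ) ^ 2 - (-s) ^ 2) / 2 + (-1/6 + s/4) * ((0:ℝ) ^ 3 - (-s) ^ 3) / 3 +
      (-1/18) * ((0:ℝ) ^ 4 - (-s) ^ 4) / 4 + (-1/24) * ((0:ℝ) ^ 5 - (-s) ^ 5) / 5) +
    ((-1/72 + s^3/12) * (s - 0) + (1/12 - s^2/4) * (s ^ 2 - (0:ℝ) ^ 2) / 2 + (-1/6 + s/4) * (s ^ 3 - (0:ℝ) ^ 3) / 3 +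
      (1/18) * (s ^ 4 - (0:ℝ) ^ 4) / 4 + (-1/24) * (s ^ 5 - (0:ℝ) ^ 5) / 5) +
    ((-1/72) * (1 - s) + (1/12) * (1 ^ 2 - s ^ 2) / 2 + (-1/6) * ((1:ℝ) ^ 3 - s ^ 3) / 3 +
      (5/36) * ((1:ℝ) ^ 4 - s ^ 4) / 4 + (-1/24) * ((1:ℝ) ^ 5 - s ^ 5) / 5) = 1/540 := by
  linear_combination (s^2/24 + 19/72) * hs2

end EGL

open EGL Set intervalIntegral in
set_option maxHeartbeats 4000000 in
theorem error_gauss2_lobatto3 (f : ℝ → ℝ) (hf : ContDiffOn ℝ 4 f (Set.Icc (-1:ℝ) 1)) :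
    ∃ ξ ∈ Set.Icc (-1:ℝ) 1,
      (∫ t in (-1:ℝ)..1, f t) =
        (1 / 2) * (f (-(Real.sqrt 3) / 3) + f (Real.sqrt 3 / 3)) +
        (1 / 2) * ((1 / 3) * f (-1) + (4 / 3) * f 0 + (1 / 3) * f 1) -
        iteratedDerivWithin 4 f (Set.Icc (-1:ℝ) 1) ξ / 540 := by
  rw [neg_div]
  set s : ℝ := Real.sqrt 3 / 3 with hs_def
  have hs2 : s ^ 2 = 1/3 := by
    rw [hs_def, div_pow, Real.sq_sqrt (by norm_num : (0:ℝ) ≤ 3)]; norm_num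
  have hsp : 0 < s := by
    rw [hs_def]; positivity
  have h13 : 1/3 < s := by nlinarith
  have h35 : s < 3/5 := by nlinarith
  -- the extension G of the fourth derivative
  have hUD : UniqueDiffOn ℝ (Icc (-1:ℝ) 1) := uniqueDiffOn_Icc (by norm_num)
  have hg4cont : ContinuousOn (iteratedDerivWithin 4 f (Icc (-1:ℝ) 1)) (Icc (-1:ℝ) 1) :=
    hf.continuousOn_iteratedDerivWithin le_rfl hUD
  set G : ℝ → ℝ := fun x =>
    iteratedDerivWithin 4 f (Icc (-1:ℝ) 1) (Set.projIcc (-1) 1 (by norm_num) x) with hG_def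
  have hGc : Continuous G := by
    apply hg4cont.comp_continuous
    · exact continuous_subtype_val.comp continuous_projIcc
    · exact fun x => (Set.projIcc (-1) 1 (by norm_num) x).2
  have hGeq : ∀ x ∈ Icc (-1:ℝ) 1, G x = iteratedDerivWithin 4 f (Icc (-1:ℝ) 1) x := by
    intro x hx
    show iteratedDerivWithin 4 f (Icc (-1) 1) (Set.projIcc (-1) 1 (by norm_num) x) = _
    rw [Set.projIcc_of_mem _ hx]
  -- node memberships
  have hmem_m1 : (-1:ℝ) ∈ Icc (-1:ℝ) 1 := ⟨le_refl _, by norm_num⟩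
  have hmem_ms : (-s) ∈ Icc (-1:ℝ) 1 := ⟨by linarith, by linarith⟩
  have hmem_0 : (0:ℝ) ∈ Icc (-1:ℝ) 1 := ⟨by norm_num, by norm_num⟩
  have hmem_s : s ∈ Icc (-1:ℝ) 1 := ⟨by linarith, by linarith⟩
  have hmem_1 : (1:ℝ) ∈ Icc (-1:ℝ) 1 := ⟨by norm_num, le_refl _⟩
  have hrep := rep hf hGc hGeq
  have hf_m1 := hrep (-1) hmem_m1
  have hf_ms := hrep (-s) hmem_ms
  have hf_0 := hrep 0 hmem_0
  have hf_s := hrep s hmem_s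
  have hf_1 := hrep 1 hmem_1
  have hint_f : (∫ t in (-1:ℝ)..1, f t) =
      2 * f (-1) + 2 * iteratedDerivWithin 1 f (Icc (-1:ℝ) 1) (-1)
      + (4 / 3) * iteratedDerivWithin 2 f (Icc (-1:ℝ) 1) (-1)
      + (2 / 3) * iteratedDerivWithin 3 f (Icc (-1:ℝ) 1) (-1) +
        (A G 0 1 - 4 * A G 1 1 + 6 * A G 2 1 - 4 * A G 3 1 + A G 4 1) / 24 := by
    rw [integral_congr (g := fun x => f (-1)
      + iteratedDerivWithin 1 f (Icc (-1:ℝ) 1) (-1) * (x + 1)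
      + iteratedDerivWithin 2 f (Icc (-1:ℝ) 1) (-1) * (x + 1) ^ 2 / 2
      + iteratedDerivWithin 3 f (Icc (-1:ℝ) 1) (-1) * (x + 1) ^ 3 / 6
      + (x ^ 3 * A G 0 x - 3 * x ^ 2 * A G 1 x + 3 * x * A G 2 x - A G 3 x) / 6)
      (fun t ht => hrep t (by rwa [uIcc_of_le (by norm_num : (-1:ℝ) ≤ 1)] at ht))]
    exact I5 hGc _ _ _ _
  -- splitting the A integrals
  have hii : ∀ (j : ℕ) (a b : ℝ), IntervalIntegrable (fun t => t ^ j * G t) MeasureTheory.volume a b :=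
    fun j a b => (contj hGc j).intervalIntegrable _ _
  have hA0 : ∀ j : ℕ, A G j 0 = A G j (-s) + ∫ t in (-s)..(0:ℝ), t ^ j * G t :=
    fun j => (integral_add_adjacent_intervals (hii j (-1) (-s)) (hii j (-s) 0)).symm
  have hAs : ∀ j : ℕ, A G j s = A G j 0 + ∫ t in (0:ℝ)..s, t ^ j * G t :=
    fun j => (integral_add_adjacent_intervals (hii j (-1) 0) (hii j 0 s)).symm
  have hA1 : ∀ j : ℕ, A G j 1 = A G j s + ∫ t in s..(1:ℝ), t ^ j * G t :=
    fun j => (integral_add_adjacent_intervals (hii j (-1) s) (hii j s 1)).symm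
  have hAms : ∀ j : ℕ, A G j (-s) = ∫ t in (-1:ℝ)..(-s), t ^ j * G t := fun j => rfl
  -- the four piece integrals
  have hQE : (1 / 2) * (f (-s) + f s) + (1 / 2) * ((1 / 3) * f (-1) + (4 / 3) * f 0 + (1 / 3) * f 1)
      - (∫ t in (-1:ℝ)..1, f t) =
      (∫ t in (-1:ℝ)..(-s), (-1/72 + (1/12 - s^2/2) * t + (-1/6) * t ^ 2 + (-5/36) * t ^ 3 + (-1/24) * t ^ 4) * G t)
      + (∫ t in (-s)..(0:ℝ), ((-1/72 + s^3/12) + (1/12 - s^2/4) * t + (-1/6 + s/4) * t ^ 2 + (-1/18) * t ^ 3 + (-1/24) * t ^ 4) * G t)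
      + (∫ t in (0:ℝ)..s, ((-1/72 + s^3/12) + (1/12 - s^2/4) * t + (-1/6 + s/4) * t ^ 2 + (1/18) * t ^ 3 + (-1/24) * t ^ 4) * G t)
      + (∫ t in s..(1:ℝ), (-1/72 + (1/12) * t + (-1/6) * t ^ 2 + (5/36) * t ^ 3 + (-1/24) * t ^ 4) * G t) := by
    rw [hf_m1, hf_ms, hf_0, hf_s, hf_1, hint_f, lincomb hGc, lincomb hGc, lincomb hGc, lincomb hGc,
      hA1 0, hA1 1, hA1 2, hA1 3, hA1 4, hAs 0, hAs 1, hAs 2, hAs 3, hAs 4,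
      hA0 0, hA0 1, hA0 2, hA0 3, hA0 4, hAms 0, hAms 1, hAms 2, hAms 3, hAms 4,
      A_neg_one G 0, A_neg_one G 1, A_neg_one G 2, A_neg_one G 3]
    linear_combination ((iteratedDerivWithin 2 f (Icc (-1:ℝ) 1) (-1)
      + iteratedDerivWithin 3 f (Icc (-1:ℝ) 1) (-1)) / 2) * hs2
  -- extrema of G on the interval
  obtain ⟨p, hpI, hpmin⟩ := isCompact_Icc.exists_isMinOn
    (Set.nonempty_Icc.2 (by norm_num : (-1:ℝ) ≤ 1)) hGc.continuousOn
  obtain ⟨q, hqI, hqmax⟩ := isCompact_Icc.exists_isMaxOn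
    (Set.nonempty_Icc.2 (by norm_num : (-1:ℝ) ≤ 1)) hGc.continuousOn
  have hmin : ∀ y ∈ Icc (-1:ℝ) 1, G p ≤ G y := fun y hy => hpmin hy
  have hmax : ∀ y ∈ Icc (-1:ℝ) 1, G y ≤ G q := fun y hy => hqmax hy
  have hsub1 : Icc (-1:ℝ) (-s) ⊆ Icc (-1:ℝ) 1 := Icc_subset_Icc le_rfl (by linarith)
  have hsub2 : Icc (-s) (0:ℝ) ⊆ Icc (-1:ℝ) 1 := Icc_subset_Icc (by linarith) (by norm_num)
  have hsub3 : Icc (0:ℝ) s ⊆ Icc (-1:ℝ) 1 := Icc_subset_Icc (by norm_num) (by linarith)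
  have hsub4 : Icc s (1:ℝ) ⊆ Icc (-1:ℝ) 1 := Icc_subset_Icc (by linarith) le_rfl
  have hb1 := piece_bound hGc (by linarith : (-1:ℝ) ≤ -s) hsub1 hmin hmax
    (fun t => -1/72 + (1/12 - s^2/2) * t + (-1/6) * t ^ 2 + (-5/36) * t ^ 3 + (-1/24) * t ^ 4)
    (by fun_prop) (fun t ht => P1nn hs2 hsp ht.1 ht.2)
  have hb2 := piece_bound hGc (by linarith : -s ≤ (0:ℝ)) hsub2 hmin hmax
    (fun t => (-1/72 + s^3/12) + (1/12 - s^2/4) * t + (-1/6 + s/4) * t ^ 2 + (-1/18) * t ^ 3 + (-1/24) * t ^ 4)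
    (by fun_prop) (fun t ht => P2nn hs2 hsp ht.1 ht.2)
  have hb3 := piece_bound hGc (by linarith : (0:ℝ) ≤ s) hsub3 hmin hmax
    (fun t => (-1/72 + s^3/12) + (1/12 - s^2/4) * t + (-1/6 + s/4) * t ^ 2 + (1/18) * t ^ 3 + (-1/24) * t ^ 4)
    (by fun_prop) (fun t ht => P3nn hs2 hsp ht.1 ht.2)
  have hb4 := piece_bound hGc (by linarith : s ≤ (1:ℝ)) hsub4 hmin hmax
    (fun t => -1/72 + (1/12) * t + (-1/6) * t ^ 2 + (5/36) * t ^ 3 + (-1/24) * t ^ 4)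
    (by fun_prop) (fun t ht => P4nn hs2 hsp ht.1 ht.2)
  have hq1 := int_quartic (-1) (-s) (-1/72) (1/12 - s^2/2) (-1/6) (-5/36) (-1/24)
  have hq2 := int_quartic (-s) 0 (-1/72 + s^3/12) (1/12 - s^2/4) (-1/6 + s/4) (-1/18) (-1/24)
  have hq3 := int_quartic 0 s (-1/72 + s^3/12) (1/12 - s^2/4) (-1/6 + s/4) (1/18) (-1/24)
  have hq4 := int_quartic s 1 (-1/72) (1/12) (-1/6) (5/36) (-1/24)
  have hsum := hv hs2
  rw [hq1] at hb1
  rw [hq2] at hb2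
  rw [hq3] at hb3
  rw [hq4] at hb4
  obtain ⟨T, hT_def⟩ : ∃ T : ℝ, T = (1 / 2) * (f (-s) + f s) + (1 / 2) * ((1 / 3) * f (-1) + (4 / 3) * f 0 + (1 / 3) * f 1)
      - (∫ t in (-1:ℝ)..1, f t) := ⟨_, rfl⟩
  rw [← hT_def] at hQE
  have hTub : T ≤ G q / 540 := by
    have hmul := congrArg (fun z => G q * z) hsum
    linarith [hb1.2, hb2.2, hb3.2, hb4.2, hQE, hmul]
  have hTlb : G p / 540 ≤ T := by
    have hmul := congrArg (fun z => G p * z) hsum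
    linarith [hb1.1, hb2.1, hb3.1, hb4.1, hQE, hmul]
  have hpq : G p ≤ G q := hmin q hqI
  have hmemT : 540 * T ∈ uIcc (G p) (G q) := by
    rw [uIcc_of_le hpq, mem_Icc]
    exact ⟨by linarith only [hTlb], by linarith only [hTub]⟩
  obtain ⟨ξ, hξ, hGξ⟩ := intermediate_value_uIcc (hGc.continuousOn (s := uIcc p q)) hmemT
  have hξI : ξ ∈ Icc (-1:ℝ) 1 := by
    have hsub : uIcc p q ⊆ Icc (-1:ℝ) 1 := by
      rw [← uIcc_of_le (by norm_num : (-1:ℝ) ≤ 1)]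
      exact uIcc_subset_uIcc (by rwa [uIcc_of_le (by norm_num : (-1:ℝ) ≤ 1)])
        (by rwa [uIcc_of_le (by norm_num : (-1:ℝ) ≤ 1)])
    exact hsub hξ
  refine ⟨ξ, hξI, ?_⟩
  have hGg : G ξ = iteratedDerivWithin 4 f (Icc (-1:ℝ) 1) ξ := hGeq ξ hξI
  rw [← hGg, hGξ]
  linarith only [hGξ, hT_def]
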